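/- Let l ≥ 1 and m ≥ 1 be integers, let V be a finite set with |V| = l·m, let v ∈ V be a fixed element, and let C ⊆ V \ {v} with |C| ≤ l/2. Partition V uniformly at random into l blocks of size m each (i.e., take a uniformly random bijection φ : V → Fin l × Fin m and let the blocks be the preimages φ⁻¹({i} × Fin m)). Then the probability that the block containing v contains no element of C is at least 1/2. -/

import Mathlib

open Finset

lemma aux_exists_equiv_pair {α : Type*} [DecidableEq α] {a b a' b' : α}
    (hab : a ≠ b) (hab' : a' ≠ b') : ∃ σ : α ≃ α, σ a = a' ∧ σ b = b' := by
  refine ⟨(Equiv.swap a a').trans (Equiv.swap (Equiv.swap a a' b) b'), ?_, ?_⟩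
  · have h1 : Equiv.swap a a' a = a' := Equiv.swap_apply_left _ _
    have h2 : Equiv.swap a a' b ≠ a' := by
      exact fun h => hab ((Equiv.swap a a').injective (h.trans h1.symm)).symm
    simp only [Equiv.trans_apply, h1]
    exact Equiv.swap_apply_of_ne_of_ne (Ne.symm h2) hab'
  · simp only [Equiv.trans_apply]
    exact Equiv.swap_apply_left _ _

lemma aux_fiber_eq {V α : Type*} [Fintype V] [DecidableEq V] [Fintype α] [DecidableEq α]
    (v c : V) {a b a' b' : α} (hab : a ≠ b) (hab' : a' ≠ b') :
    (univ.filter (fun φ : V ≃ α => φ v = a ∧ φ c = b)).card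
      = (univ.filter (fun φ : V ≃ α => φ v = a' ∧ φ c = b')).card := by
  obtain ⟨σ, hσa, hσb⟩ := aux_exists_equiv_pair hab hab'
  refine Finset.card_nbij' (fun φ => φ.trans σ) (fun φ => φ.trans σ.symm) ?_ ?_ ?_ ?_
  · intro φ hφ
    simp only [mem_coe, mem_filter, mem_univ, true_and, Equiv.trans_apply] at *
    rw [hφ.1, hφ.2, hσa, hσb]; exact ⟨rfl, rfl⟩
  · intro φ hφ
    simp only [mem_coe, mem_filter, mem_univ, true_and, Equiv.trans_apply] at *
    rw [hφ.1, hφ.2, ← hσa, ← hσb, Equiv.symm_apply_apply, Equiv.symm_apply_apply]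
    exact ⟨rfl, rfl⟩
  · intro φ _; ext x; simp
  · intro φ _; ext x; simp

lemma aux_N {V α : Type*} [Fintype V] [DecidableEq V] [Fintype α] [DecidableEq α]
    (v c : V) (hvc : v ≠ c) {a₀ b₀ : α} (h₀ : a₀ ≠ b₀) :
    Fintype.card (V ≃ α)
      = (Fintype.card α * Fintype.card α - Fintype.card α)
        * (univ.filter (fun φ : V ≃ α => φ v = a₀ ∧ φ c = b₀)).card := by
  have H : ∀ φ ∈ (univ : Finset (V ≃ α)), (φ v, φ c) ∈ (univ : Finset α).offDiag := by
    intro φ _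
    exact Finset.mem_offDiag.2 ⟨mem_univ _, mem_univ _, fun h => hvc (φ.injective h)⟩
  have hsum := Finset.card_eq_sum_card_fiberwise H
  have hcard : Fintype.card (V ≃ α) = (univ : Finset (V ≃ α)).card := rfl
  rw [hcard, hsum]
  have hterm : ∀ p ∈ (univ : Finset α).offDiag,
      ((univ : Finset (V ≃ α)).filter (fun φ => (φ v, φ c) = p)).card
        = (univ.filter (fun φ : V ≃ α => φ v = a₀ ∧ φ c = b₀)).card := by
    intro p hp
    have hp' : p.1 ≠ p.2 := (Finset.mem_offDiag.1 hp).2.2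
    simp only [Prod.ext_iff]
    exact aux_fiber_eq v c hp' h₀
  rw [Finset.sum_congr rfl hterm, Finset.sum_const, smul_eq_mul, Finset.offDiag_card,
    Finset.card_univ]

lemma aux_P' (l m : ℕ) :
    ((univ : Finset ((Fin l × Fin m) × (Fin l × Fin m))).filter
        (fun p => p.1 ≠ p.2 ∧ p.2.1 = p.1.1)).card = l * (m * m - m) := by
  have key := Finset.card_nbij'
    (s := (univ : Finset ((Fin l × Fin m) × (Fin l × Fin m))).filter
        (fun p => p.1 ≠ p.2 ∧ p.2.1 = p.1.1))
    (t := (univ : Finset (Fin l)) ×ˢ ((univ : Finset (Fin m)).offDiag))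
    (fun p => (p.1.1, (p.1.2, p.2.2))) (fun q => ((q.1, q.2.1), (q.1, q.2.2)))
    ?_ ?_ ?_ ?_
  · rw [key, Finset.card_product, Finset.offDiag_card]
    simp
  · intro p hp
    simp only [mem_coe, mem_filter, mem_univ, true_and] at hp
    refine Finset.mem_product.2 ⟨mem_univ _, Finset.mem_offDiag.2 ⟨mem_univ _, mem_univ _, ?_⟩⟩
    intro h
    exact hp.1 (Prod.ext hp.2.symm h)
  · intro q hq
    have h2 := (Finset.mem_offDiag.1 (Finset.mem_product.1 hq).2).2.2
    refine Finset.mem_filter.2 ⟨mem_univ _, ?_, rfl⟩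
    intro h
    exact h2 (congrArg Prod.snd h)
  · intro p hp
    simp only [mem_coe, mem_filter, mem_univ, true_and] at hp
    exact Prod.ext (Prod.ext rfl rfl) (Prod.ext hp.2.symm rfl)
  · intro q _
    rfl

lemma aux_bad {l m : ℕ} {V : Type*} [Fintype V] [DecidableEq V]
    (v c : V) (hvc : v ≠ c) {a₀ b₀ : Fin l × Fin m} (h₀ : a₀ ≠ b₀) :
    (univ.filter (fun φ : V ≃ Fin l × Fin m => (φ c).1 = (φ v).1)).card
      = (l * (m * m - m))
        * (univ.filter (fun φ : V ≃ Fin l × Fin m => φ v = a₀ ∧ φ c = b₀)).card := by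
  set s := univ.filter (fun φ : V ≃ Fin l × Fin m => (φ c).1 = (φ v).1) with hs
  set P' := (univ : Finset ((Fin l × Fin m) × (Fin l × Fin m))).filter
      (fun p => p.1 ≠ p.2 ∧ p.2.1 = p.1.1) with hP'
  have H : ∀ φ ∈ s, (φ v, φ c) ∈ P' := by
    intro φ hφ
    simp only [hs, mem_filter, mem_univ, true_and] at hφ
    refine Finset.mem_filter.2 ⟨mem_univ _, fun h => ?_, hφ⟩
    exact hvc (φ.injective (show φ v = φ c from h))
  have hsum := Finset.card_eq_sum_card_fiberwise H
  have hterm : ∀ p ∈ P',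
      (s.filter (fun φ => (φ v, φ c) = p)).card
        = (univ.filter (fun φ : V ≃ Fin l × Fin m => φ v = a₀ ∧ φ c = b₀)).card := by
    intro p hp
    rw [hP', mem_filter] at hp
    have heq : s.filter (fun φ => (φ v, φ c) = p)
        = univ.filter (fun φ : V ≃ Fin l × Fin m => φ v = p.1 ∧ φ c = p.2) := by
      ext φ
      simp only [hs, Finset.filter_filter, mem_filter, mem_univ, true_and]
      constructor
      · rintro ⟨-, h⟩
        exact ⟨congrArg Prod.fst h, congrArg Prod.snd h⟩
      · rintro ⟨h1, h2⟩
        refine ⟨by rw [h1, h2, hp.2.2], Prod.ext h1 h2⟩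
    rw [heq]
    exact aux_fiber_eq v c hp.2.1 h₀
  rw [hsum, Finset.sum_congr rfl hterm, Finset.sum_const, smul_eq_mul, aux_P' l m]

/-- **Random partition avoids the confusion set (Markov step in Tournament-Partition).**
`V` has `l·m` elements, `v ∈ V`, and `C ⊆ V \ {v}` has at most `l/2` elements. A
uniformly random bijection `φ : V ≃ Fin l × Fin m` partitions `V` into `l` blocks of
size `m` (the block of `x` is `(φ x).1`). The probability (fraction of bijections) that
the block containing `v` contains no element of `C` is at least `1/2`. -/
theorem stmt_18 (l m : ℕ) (hl : 1 ≤ l) (hm : 1 ≤ m)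
    {V : Type*} [Fintype V] [DecidableEq V] (hcard : Fintype.card V = l * m)
    (v : V) (C : Finset V) (hvC : v ∉ C) (hC : (C.card : ℝ) ≤ (l : ℝ) / 2) :
    (1 : ℝ) / 2 ≤
      ((Finset.univ.filter
          (fun φ : V ≃ Fin l × Fin m => ∀ c ∈ C, (φ c).1 ≠ (φ v).1)).card : ℝ) /
        (Fintype.card (V ≃ Fin l × Fin m) : ℝ) := by
  set n := l * m with hn
  have hα : Fintype.card (Fin l × Fin m) = n := by simp [hn]
  have hVα : Nonempty (V ≃ Fin l × Fin m) := Fintype.card_eq.mp (by rw [hα, hcard])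
  have hNpos : 0 < Fintype.card (V ≃ Fin l × Fin m) := Fintype.card_pos
  set N := Fintype.card (V ≃ Fin l × Fin m) with hN
  set good := univ.filter (fun φ : V ≃ Fin l × Fin m => ∀ c ∈ C, (φ c).1 ≠ (φ v).1) with hgood
  by_cases hCe : C = ∅
  · have : good = univ := by
      rw [hgood, hCe]
      simp
    rw [this, Finset.card_univ, ← hN, div_self (by exact_mod_cast hNpos.ne')]
    linarith
  · have hCpos : 1 ≤ C.card := Nat.one_le_iff_ne_zero.2 (fun h => hCe (Finset.card_eq_zero.1 h))
    have h2C : 2 * C.card ≤ l := by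
      have h : (2 * C.card : ℝ) ≤ l := by push_cast; linarith
      exact_mod_cast h
    have hl2 : 2 ≤ l := le_trans (by omega) h2C
    have hn2 : 2 ≤ n := le_trans hl2 (Nat.le_mul_of_pos_right l hm)
    obtain ⟨a₀, b₀, h₀⟩ := Fintype.exists_pair_of_one_lt_card (α := Fin l × Fin m)
      (by rw [hα]; omega)
    set bad := univ.filter (fun φ : V ≃ Fin l × Fin m => ¬ ∀ c ∈ C, (φ c).1 ≠ (φ v).1)
      with hbad
    have hsplit : good.card + bad.card = N := by
      rw [hgood, hbad, hN]
      exact Finset.card_filter_add_card_filter_not _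
    set K := n * n - n with hK
    set D := l * (m * m - m) with hD
    have hkey : ∀ c ∈ C,
        (univ.filter (fun φ : V ≃ Fin l × Fin m => (φ c).1 = (φ v).1)).card * K
          = D * N := by
      intro c hc
      have hvc : v ≠ c := fun h => hvC (h ▸ hc)
      rw [aux_bad v c hvc h₀, hN, aux_N v c hvc h₀, hα, ← hK, ← hD]
      ring
    have hbadsub : bad ⊆ C.biUnion
        (fun c => univ.filter (fun φ : V ≃ Fin l × Fin m => (φ c).1 = (φ v).1)) := by
      intro φ hφ
      rw [hbad, mem_filter] at hφ
      push_neg at hφ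
      obtain ⟨c, hc, hcc⟩ := hφ.2
      exact Finset.mem_biUnion.2 ⟨c, hc, mem_filter.2 ⟨mem_univ _, hcc⟩⟩
    have hb1 : bad.card ≤ ∑ c ∈ C,
        (univ.filter (fun φ : V ≃ Fin l × Fin m => (φ c).1 = (φ v).1)).card :=
      le_trans (Finset.card_le_card hbadsub) Finset.card_biUnion_le
    have hb2 : bad.card * K ≤ C.card * (D * N) := by
      calc bad.card * K
          ≤ (∑ c ∈ C,
            (univ.filter (fun φ : V ≃ Fin l × Fin m => (φ c).1 = (φ v).1)).card) * K :=
            Nat.mul_le_mul_right _ hb1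
        _ = ∑ c ∈ C,
            (univ.filter (fun φ : V ≃ Fin l × Fin m => (φ c).1 = (φ v).1)).card * K := by
            rw [Finset.sum_mul]
        _ = ∑ _c ∈ C, D * N := Finset.sum_congr rfl hkey
        _ = C.card * (D * N) := by rw [Finset.sum_const, smul_eq_mul]
    have hKn : K = n * (n - 1) := by rw [hK, Nat.mul_sub, mul_one]
    have hKpos : 0 < K := by
      rw [hKn]; exact Nat.mul_pos (by omega) (by omega)
    have hlD : l * D ≤ K := by
      have hmm : m * m - m = m * (m - 1) := by rw [Nat.mul_sub, mul_one]
      have h1 : l * (m - 1) ≤ n - 1 := by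
        have : l * (m - 1) = n - l := by rw [Nat.mul_sub, mul_one, hn]
        rw [this]
        exact Nat.sub_le_sub_left hl n
      calc l * D = (l * m) * (l * (m - 1)) := by rw [hD, hmm]; ring
        _ ≤ (l * m) * (n - 1) := Nat.mul_le_mul_left _ h1
        _ = K := by rw [hKn, hn]
    have hfinal : 2 * bad.card ≤ N := by
      have step : (2 * bad.card) * K ≤ N * K := by
        calc (2 * bad.card) * K = 2 * (bad.card * K) := by ring
          _ ≤ 2 * (C.card * (D * N)) := Nat.mul_le_mul_left _ hb2
          _ = (2 * C.card) * D * N := by ring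
          _ ≤ l * D * N := Nat.mul_le_mul_right _ (Nat.mul_le_mul_right _ h2C)
          _ ≤ K * N := Nat.mul_le_mul_right _ hlD
          _ = N * K := Nat.mul_comm _ _
      exact Nat.le_of_mul_le_mul_right step hKpos
    have hg : N ≤ 2 * good.card := by omega
    rw [le_div_iff₀ (by exact_mod_cast hNpos : (0:ℝ) < (N:ℝ))]
    have hg' : (N : ℝ) ≤ 2 * (good.card : ℝ) := by exact_mod_cast hg
    linarith
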